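/- Let ω_i, ω_ℓ, ω_m be mutually distinct real numbers, let N ≥ 2 be a real number, and let σ, τ : ℝ → ℂ be continuous with |σ(θ)| ≤ C₁ · ⟨θ⟩^{−N} and |τ(θ)| ≤ C₁ · ⟨θ⟩^{−N} for all θ ∈ ℝ. Then there exists a constant C₂ > 0, depending only on C₁, N and the ω's, such that for all θ₀ ∈ ℝ and all ξ_d ≥ 0: ∫_{ξ_d}^{+∞} |σ(θ₀ + ω_i ξ_d + (ω_ℓ − ω_i)s) · τ(θ₀ + ω_i ξ_d + (ω_m − ω_i)s)| ds ≤ C₂ · ⟨ξ_d⟩^{−N+1}. -/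

import Mathlib

set_option maxHeartbeats 1000000


open MeasureTheory
open scoped ENNReal

private lemma aux_integrable (N ξd : ℝ) (hN : 2 ≤ N) (hξ : 0 ≤ ξd) :
    IntegrableOn (fun s : ℝ => (1 + s) ^ (-N)) (Set.Ioi ξd) ∧
    ∫ s in Set.Ioi ξd, (1 + s) ^ (-N) = (1 + ξd) ^ (1 - N) / (N - 1) := by
  have hN1 : (1 : ℝ) - N ≠ 0 := by linarith
  set g : ℝ → ℝ := fun s => (1 + s) ^ (1 - N) / (1 - N) with hg
  have hderiv : ∀ x ∈ Set.Ici ξd, HasDerivAt g ((1 + x) ^ (-N)) x := by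
    intro x hx
    have hx0 : (0 : ℝ) < 1 + x := by
      have := hx.out; linarith
    have h1 : HasDerivAt (fun s : ℝ => 1 + s) 1 x := by
      simpa using (hasDerivAt_id x).const_add (1 : ℝ)
    have h2 := (h1.rpow_const (p := 1 - N) (Or.inl hx0.ne')).div_const (1 - N)
    have heq : (1 : ℝ) * (1 - N) * (1 + x) ^ (1 - N - 1) / (1 - N) = (1 + x) ^ (-N) := by
      rw [show (1 - N - 1 : ℝ) = -N by ring]
      field_simp
    rwa [heq] at h2
  have hpos : ∀ x ∈ Set.Ioi ξd, 0 ≤ (1 + x) ^ (-N) := by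
    intro x hx
    have hx0 : (0 : ℝ) ≤ 1 + x := by have := hx.out; linarith
    exact Real.rpow_nonneg hx0 _
  have htend : Filter.Tendsto g Filter.atTop (nhds 0) := by
    have h1 : Filter.Tendsto (fun s : ℝ => 1 + s) Filter.atTop Filter.atTop :=
      Filter.tendsto_atTop_add_const_left _ 1 Filter.tendsto_id
    have h2 : Filter.Tendsto (fun s : ℝ => (1 + s) ^ (1 - N)) Filter.atTop (nhds 0) := by
      have h3 := (tendsto_rpow_neg_atTop (y := N - 1) (by linarith)).comp h1
      simpa [Function.comp_def, neg_sub] using h3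
    have := h2.div_const (1 - N)
    simpa using this
  constructor
  · exact integrableOn_Ioi_deriv_of_nonneg' hderiv hpos htend
  · rw [integral_Ioi_of_hasDerivAt_of_nonneg' hderiv hpos htend, hg]
    have hN2 : N - 1 ≠ 0 := by linarith
    field_simp
    ring

theorem stmt6 (ωi ωl ωm : ℝ) (h1 : ωi ≠ ωl) (h2 : ωi ≠ ωm) (h3 : ωl ≠ ωm)
    (N : ℝ) (hN : 2 ≤ N) (C₁ : ℝ) :
    ∃ C₂ > (0 : ℝ), ∀ σ τ : ℝ → ℂ, Continuous σ → Continuous τ →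
      (∀ θ : ℝ, ‖σ θ‖ ≤ C₁ * (((1 + θ ^ 2) ^ (1/2 : ℝ)) ^ (-N))) →
      (∀ θ : ℝ, ‖τ θ‖ ≤ C₁ * (((1 + θ ^ 2) ^ (1/2 : ℝ)) ^ (-N))) →
      ∀ θ₀ ξd : ℝ, 0 ≤ ξd →
        (∫⁻ s in Set.Ioi ξd,
            (‖σ (θ₀ + ωi * ξd + (ωl - ωi) * s) * τ (θ₀ + ωi * ξd + (ωm - ωi) * s)‖₊ : ℝ≥0∞)) ≤
          ENNReal.ofReal (C₂ * (((1 + ξd ^ 2) ^ (1/2 : ℝ)) ^ (-N + 1))) := by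
  set c : ℝ := ωl - ωm with hc
  have hc0 : c ≠ 0 := sub_ne_zero.mpr h3
  set m : ℝ := min 1 |c| / 2 with hm
  have hm0 : 0 < m := by
    have : 0 < |c| := abs_pos.mpr hc0
    have : 0 < min 1 |c| := lt_min one_pos this
    positivity
  have hm1 : 2 * m ≤ 1 := by
    rw [hm]; have := min_le_left 1 |c|; linarith
  have hm2 : 2 * m ≤ |c| := by
    rw [hm]; have := min_le_right 1 |c|; linarith
  set K : ℝ := (C₁ ^ 2 + 1) * m ^ (-N) with hK
  have hKpos : 0 < K := by
    have : 0 < m ^ (-N) := Real.rpow_pos_of_pos hm0 _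
    positivity
  have hN1 : (0 : ℝ) < N - 1 := by linarith
  refine ⟨K / (N - 1), by positivity, ?_⟩
  intro σ τ hσc hτc hσ hτ θ₀ ξd hξ
  -- pointwise bound
  have key : ∀ s ∈ Set.Ioi ξd,
      (‖σ (θ₀ + ωi * ξd + (ωl - ωi) * s) * τ (θ₀ + ωi * ξd + (ωm - ωi) * s)‖₊ : ℝ≥0∞) ≤
      ENNReal.ofReal (K * (1 + s) ^ (-N)) := by
    intro s hs
    have hs0 : 0 ≤ s := le_trans hξ (le_of_lt hs.out)
    set x : ℝ := θ₀ + ωi * ξd + (ωl - ωi) * s with hx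
    set y : ℝ := θ₀ + ωi * ξd + (ωm - ωi) * s with hy
    have hxy : x - y = c * s := by rw [hx, hy, hc]; ring
    rw [← ENNReal.ofReal_coe_nnreal, coe_nnnorm]
    apply ENNReal.ofReal_le_ofReal
    have hC₁ : 0 ≤ C₁ := by
      have := hσ 0
      have h0 : ((1 : ℝ) + 0 ^ 2) ^ (1/2 : ℝ) = 1 := by norm_num
      rw [h0, Real.one_rpow] at this
      have := norm_nonneg (σ 0)
      linarith
    have hX : (0:ℝ) ≤ (1 + x ^ 2) ^ (1/2 : ℝ) := Real.rpow_nonneg (by positivity) _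
    have hY : (0:ℝ) ≤ (1 + y ^ 2) ^ (1/2 : ℝ) := Real.rpow_nonneg (by positivity) _
    have hXr : (0:ℝ) ≤ ((1 + x ^ 2) ^ (1/2 : ℝ)) ^ (-N) := Real.rpow_nonneg hX _
    have hYr : (0:ℝ) ≤ ((1 + y ^ 2) ^ (1/2 : ℝ)) ^ (-N) := Real.rpow_nonneg hY _
    have step1 : ‖σ x * τ y‖ ≤ (C₁ ^ 2) * (((1 + x ^ 2) ^ (1/2:ℝ) * (1 + y ^ 2) ^ (1/2:ℝ)) ^ (-N)) := by
      rw [norm_mul]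
      calc ‖σ x‖ * ‖τ y‖ ≤ (C₁ * ((1 + x ^ 2) ^ (1/2:ℝ)) ^ (-N)) *
            (C₁ * ((1 + y ^ 2) ^ (1/2:ℝ)) ^ (-N)) := by
            exact mul_le_mul (hσ x) (hτ y) (norm_nonneg _) (by positivity)
        _ = (C₁ ^ 2) * (((1 + x ^ 2) ^ (1/2:ℝ)) ^ (-N) * ((1 + y ^ 2) ^ (1/2:ℝ)) ^ (-N)) := by ring
        _ = (C₁ ^ 2) * (((1 + x ^ 2) ^ (1/2:ℝ) * (1 + y ^ 2) ^ (1/2:ℝ)) ^ (-N)) := by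
            rw [Real.mul_rpow hX hY]
    -- lower bound for the product of japanese brackets
    have prodlb : m * (1 + s) ≤ (1 + x ^ 2) ^ (1/2:ℝ) * (1 + y ^ 2) ^ (1/2:ℝ) := by
      rw [← Real.sqrt_eq_rpow, ← Real.sqrt_eq_rpow, ← Real.sqrt_mul (by positivity)]
      rw [show m * (1 + s) = Real.sqrt ((m * (1+s))^2) from (Real.sqrt_sq (by positivity)).symm]
      apply Real.sqrt_le_sqrt
      have habs : |c| ^ 2 = c ^ 2 := sq_abs c
      have hxy2 : (c * s) ^ 2 = (x - y) ^ 2 := by rw [hxy]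
      have hA : 1 + (c * s) ^ 2 ≤ 2 * ((1 + x ^ 2) * (1 + y ^ 2)) := by
        nlinarith [hxy2, sq_nonneg (x + y), sq_nonneg (x * y)]
      have h4m1 : 4 * m ^ 2 ≤ 1 := by nlinarith [hm0.le]
      have h4mc : 4 * m ^ 2 ≤ c ^ 2 := by nlinarith [hm0.le, abs_nonneg c]
      have hB : 4 * m ^ 2 * (1 + s ^ 2) ≤ 1 + (c * s) ^ 2 := by
        nlinarith [mul_le_mul_of_nonneg_right h4mc (sq_nonneg s)]
      have hC : (m * (1 + s)) ^ 2 ≤ 2 * m ^ 2 * (1 + s ^ 2) := by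
        nlinarith [mul_nonneg (sq_nonneg m) (sq_nonneg (1 - s))]
      linarith
    have step2 : ((1 + x ^ 2) ^ (1/2:ℝ) * (1 + y ^ 2) ^ (1/2:ℝ)) ^ (-N) ≤ (m * (1 + s)) ^ (-N) :=
      Real.rpow_le_rpow_of_nonpos (by positivity) prodlb (by linarith)
    have step3 : (m * (1 + s)) ^ (-N) = m ^ (-N) * (1 + s) ^ (-N) :=
      Real.mul_rpow hm0.le (by linarith)
    calc ‖σ x * τ y‖ ≤ (C₁ ^ 2) * (((1 + x ^ 2) ^ (1/2:ℝ) * (1 + y ^ 2) ^ (1/2:ℝ)) ^ (-N)) := step1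
      _ ≤ (C₁ ^ 2 + 1) * ((m * (1 + s)) ^ (-N)) := by
          apply mul_le_mul (by linarith) step2 (Real.rpow_nonneg (by positivity) _) (by positivity)
      _ = K * (1 + s) ^ (-N) := by rw [step3, hK]; ring
  calc (∫⁻ s in Set.Ioi ξd,
          (‖σ (θ₀ + ωi * ξd + (ωl - ωi) * s) * τ (θ₀ + ωi * ξd + (ωm - ωi) * s)‖₊ : ℝ≥0∞))
      ≤ ∫⁻ s in Set.Ioi ξd, ENNReal.ofReal (K * (1 + s) ^ (-N)) :=
        setLIntegral_mono' measurableSet_Ioi key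
    _ = ENNReal.ofReal (∫ s in Set.Ioi ξd, K * (1 + s) ^ (-N)) := by
        rw [ofReal_integral_eq_lintegral_ofReal]
        · exact ((aux_integrable N ξd hN hξ).1.const_mul K)
        · filter_upwards [ae_restrict_mem measurableSet_Ioi] with s hs
          have : (0:ℝ) ≤ 1 + s := by have := hs.out; linarith
          positivity
    _ ≤ ENNReal.ofReal (K / (N - 1) * (((1 + ξd ^ 2) ^ (1/2 : ℝ)) ^ (-N + 1))) := by
        apply ENNReal.ofReal_le_ofReal
        rw [MeasureTheory.integral_const_mul, (aux_integrable N ξd hN hξ).2]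
        rw [show (-N + 1 : ℝ) = 1 - N by ring]
        have hbr : ((1 + ξd ^ 2) ^ (1/2 : ℝ)) ≤ 1 + ξd := by
          rw [← Real.sqrt_eq_rpow]
          rw [show (1 + ξd : ℝ) = Real.sqrt ((1+ξd)^2) from (Real.sqrt_sq (by positivity)).symm]
          apply Real.sqrt_le_sqrt
          nlinarith
        have hbrpos : (0:ℝ) < (1 + ξd ^ 2) ^ (1/2 : ℝ) := Real.rpow_pos_of_pos (by positivity) _
        have h4 : (1 + ξd) ^ (1 - N) ≤ ((1 + ξd ^ 2) ^ (1/2 : ℝ)) ^ (1 - N) :=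
          Real.rpow_le_rpow_of_nonpos hbrpos hbr (by linarith)
        rw [div_mul_eq_mul_div, ← mul_div_assoc]
        gcongr
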